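/- arXiv:2106.05274 — 2 statements merged into one kernel-verified Lean document; each statement's English description precedes it below -/
import Mathlib

section
/- Let d ≥ 1, let 1 ≤ m ≤ d, and let α and β be ℤ₂-cochains on the d-dimensional hypercube. Then δ(α ∪_m β) = (δα) ∪_m β + α ∪_m (δβ) + α ∪_{m−1} β + β ∪_{m−1} α, as an equality of ℤ₂-cochains. -/
/-- The three possible entries of a cell label of the hypercube:
`dot` = `•` (a spanned direction), `pls` = `+`, `mns` = `−`. -/
inductive Sgn : Type
  | dot : Sgn
  | pls : Sgn
  | mns : Sgn
  deriving DecidableEq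

instance : Fintype Sgn where
  elems := {Sgn.dot, Sgn.pls, Sgn.mns}
  complete := fun x => by cases x <;> simp

/-- A cell of the `d`-dimensional hypercube, labeled by a tuple in `{•,+,−}^d`. -/
abbrev Cell (d : ℕ) := Fin d → Sgn

/-- A `ℤ₂`-cochain on the `d`-dimensional hypercube. -/
abbrev Cochain (d : ℕ) := Cell d → ZMod 2

/-- The top cell `(•,…,•)`. -/
def topCell (d : ℕ) : Cell d := fun _ => Sgn.dot

/-- The set of coordinates of a cell labeled `•`. -/
def dots {d : ℕ} (w : Cell d) : Finset (Fin d) :=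
  Finset.univ.filter (fun j => w j = Sgn.dot)

/-- The coboundary of a `ℤ₂`-cochain: `(δα)(w)` is the sum of `α` over all cells obtained
from `w` by replacing exactly one entry equal to `•` by `+` or by `−`. -/
def delta {d : ℕ} (α : Cochain d) : Cochain d := fun w =>
  ∑ j ∈ dots w, (α (Function.update w j Sgn.pls) + α (Function.update w j Sgn.mns))

/-- The set of coordinates where both `z` and `z'` are `•`. -/
def bothDot {d : ℕ} (z z' : Cell d) : Finset (Fin d) :=
  Finset.univ.filter (fun j => z j = Sgn.dot ∧ z' j = Sgn.dot)

/-- The allowed values of `(z_j, z'_j)` at a coordinate `j` not in the common-`•` set `I`: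
`(+,•)` or `(•,−)` when `ℓ(j) = #{i ∈ I : i < j}` is even, and `(−,•)` or `(•,+)` when it
is odd. -/
def pairCond {d : ℕ} (I : Finset (Fin d)) (j : Fin d) (a b : Sgn) : Prop :=
  if (I.filter (fun i => i < j)).card % 2 = 0 then
    (a = Sgn.pls ∧ b = Sgn.dot) ∨ (a = Sgn.dot ∧ b = Sgn.mns)
  else
    (a = Sgn.mns ∧ b = Sgn.dot) ∨ (a = Sgn.dot ∧ b = Sgn.pls)

/-- The pairs `(z,z')` appearing in the `m`-th higher cup product evaluated on the cell `w`:
the entries of `w` equal to `+` or `−` are fixed in both arguments, there are exactly `m`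
coordinates where both `z` and `z'` are `•`, and at the remaining `•`-coordinates of `w`
the parity condition `pairCond` holds. -/
def IntPair {d : ℕ} (m : ℕ) (w z z' : Cell d) : Prop :=
  (∀ j, w j ≠ Sgn.dot → z j = w j ∧ z' j = w j) ∧
    (bothDot z z').card = m ∧
    ∀ j, w j = Sgn.dot → j ∉ bothDot z z' → pairCond (bothDot z z') j (z j) (z' j)

open Classical in
/-- The finite set of pairs in `Int_m` relative to the cell `w`. -/
noncomputable def intPairs {d : ℕ} (m : ℕ) (w : Cell d) : Finset (Cell d × Cell d) :=
  Finset.univ.filter (fun p => IntPair m w p.1 p.2)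

/-- The higher cup product `α ∪_m β` of `ℤ₂`-cochains:
`(α ∪_m β)(w) = Σ_{(z,z') ∈ Int_m(w)} α(z)·β(z')`. -/
noncomputable def cup {d : ℕ} (m : ℕ) (α β : Cochain d) : Cochain d := fun w =>
  ∑ p ∈ intPairs m w, α p.1 * β p.2

open Classical Finset

namespace CupAux

variable {d : ℕ}

/-- counting lemma: a sum of `F ∘ g` equals a fiber-counted sum. -/
lemma countSum' {ι κ : Type*} [Fintype κ] [DecidableEq κ] (S : Finset ι) (g : ι → κ)
    (F : κ → ZMod 2) :
    ∑ i ∈ S, F (g i) = ∑ y : κ, ((S.filter (fun i => g i = y)).card : ZMod 2) * F y := by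
  have : ∀ y : κ, ((S.filter (fun i => g i = y)).card : ZMod 2) * F y
      = ∑ i ∈ S, if g i = y then F y else 0 := by
    intro y
    rw [card_filter]
    push_cast
    rw [Finset.sum_mul]
    congr 1; ext i
    split <;> simp
  simp_rw [this]
  rw [Finset.sum_comm]
  congr 1; ext i
  rw [Finset.sum_ite_eq Finset.univ (g i) (fun y => F y)]
  simp

lemma countSum2 {ι₀ κ₀ κ : Type*} [Fintype κ] [DecidableEq κ] (S₀ : Finset ι₀)
    (t : ι₀ → Finset κ₀) (g : ι₀ → κ₀ → κ) (F : κ → ZMod 2) :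
    ∑ i ∈ S₀, ∑ k ∈ t i, F (g i k)
      = ∑ y : κ, ((∑ i ∈ S₀, ((t i).filter (fun k => g i k = y)).card : ℕ) : ZMod 2) * F y := by
  have h : ∀ i ∈ S₀, ∑ k ∈ t i, F (g i k)
      = ∑ y : κ, (((t i).filter (fun k => g i k = y)).card : ZMod 2) * F y :=
    fun i _ => countSum' (t i) (g i) F
  rw [Finset.sum_congr rfl h, Finset.sum_comm]
  congr 1; ext y
  push_cast
  rw [Finset.sum_mul]

end CupAux
namespace CupAux

/-- number of `(j,s)` giving `(u,v)` in the left-hand side -/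
noncomputable def cL (m : ℕ) (w u v : Cell d) : ℕ :=
  ((dots w ×ˢ ({Sgn.pls, Sgn.mns} : Finset Sgn)).filter
    (fun q => IntPair m (Function.update w q.1 q.2) u v)).card

noncomputable def cA (m : ℕ) (w u v : Cell d) : ℕ :=
  (Finset.univ.filter (fun j : Fin d =>
    u j ≠ Sgn.dot ∧ IntPair m w (Function.update u j Sgn.dot) v)).card

noncomputable def cB (m : ℕ) (w u v : Cell d) : ℕ :=
  (Finset.univ.filter (fun j : Fin d =>
    v j ≠ Sgn.dot ∧ IntPair m w u (Function.update v j Sgn.dot))).card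

lemma mem_intPairs (m : ℕ) (w : Cell d) (p : Cell d × Cell d) :
    p ∈ intPairs m w ↔ IntPair m w p.1 p.2 := by
  simp [intPairs]

lemma sumCardAux {γ δ : Type*} [Fintype δ] [DecidableEq δ] [DecidableEq γ] (A : Finset γ)
    (t : γ → Finset δ) (φ : γ → δ → Prop) [∀ p q, Decidable (φ p q)] :
    ∑ p ∈ A, ((t p).filter (fun q => φ p q)).card
      = ((A ×ˢ (Finset.univ : Finset δ)).filter (fun r => r.2 ∈ t r.1 ∧ φ r.1 r.2)).card := by
  rw [Finset.card_filter, Finset.sum_product]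
  refine Finset.sum_congr rfl (fun p _ => ?_)
  rw [Finset.card_filter]
  rw [← Finset.sum_filter_add_sum_filter_not Finset.univ (fun q => q ∈ t p)]
  have h1 : (Finset.univ.filter (fun q => q ∈ t p)) = t p := by ext q; simp
  rw [h1]
  have h2 : ∀ q ∈ Finset.univ.filter (fun q => q ∉ t p),
      (if q ∈ t p ∧ φ p q then (1:ℕ) else 0) = 0 := by
    intro q hq
    simp only [Finset.mem_filter] at hq
    simp [hq.2]
  rw [Finset.sum_congr rfl h2, Finset.sum_const_zero, add_zero]
  refine Finset.sum_congr rfl (fun q hq => ?_)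
  simp [hq]

lemma sideL (m : ℕ) (α β : Cochain d) (w : Cell d) :
    delta (cup m α β) w
      = ∑ y : Cell d × Cell d, ((cL m w y.1 y.2 : ℕ) : ZMod 2) * (α y.1 * β y.2) := by
  have step1 : delta (cup m α β) w
      = ∑ q ∈ dots w ×ˢ ({Sgn.pls, Sgn.mns} : Finset Sgn),
          ∑ p ∈ intPairs m (Function.update w q.1 q.2), α p.1 * β p.2 := by
    rw [Finset.sum_product]
    unfold delta
    refine Finset.sum_congr rfl (fun j _ => ?_)
    rw [Finset.sum_pair (by decide : Sgn.pls ≠ Sgn.mns)]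
    rfl
  rw [step1, countSum2 _ _ (fun _ k => k)]
  refine Finset.sum_congr rfl (fun y _ => ?_)
  congr 2
  unfold cL
  rw [Finset.card_filter]
  refine Finset.sum_congr rfl (fun q _ => ?_)
  rw [Finset.filter_eq']
  by_cases h : y ∈ intPairs m (Function.update w q.1 q.2)
  · rw [if_pos h, if_pos ((mem_intPairs _ _ _).1 h)]; simp
  · rw [if_neg h, if_neg (fun hc => h ((mem_intPairs _ _ _).2 hc))]; simp

end CupAux
namespace CupAux

open Sgn in
lemma sideA (m : ℕ) (α β : Cochain d) (w : Cell d) :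
    cup m (delta α) β w
      = ∑ y : Cell d × Cell d, ((cA m w y.1 y.2 : ℕ) : ZMod 2) * (α y.1 * β y.2) := by
  have step1 : cup m (delta α) β w
      = ∑ p ∈ intPairs m w, ∑ q ∈ dots p.1 ×ˢ ({Sgn.pls, Sgn.mns} : Finset Sgn),
          α (Function.update p.1 q.1 q.2) * β p.2 := by
    unfold cup delta
    refine Finset.sum_congr rfl (fun p _ => ?_)
    rw [Finset.sum_product, Finset.sum_mul]
    refine Finset.sum_congr rfl (fun j _ => ?_)
    rw [Finset.sum_pair (by decide : Sgn.pls ≠ Sgn.mns), add_mul]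
  rw [step1]
  refine Eq.trans (countSum2 (intPairs m w)
    (fun p => dots p.1 ×ˢ ({Sgn.pls, Sgn.mns} : Finset Sgn))
    (fun p q => ((Function.update p.1 q.1 q.2, p.2) : Cell d × Cell d))
    (fun y => α y.1 * β y.2)) ?_
  refine Finset.sum_congr rfl (fun y _ => ?_)
  show (_ : ZMod 2) * _ = _
  congr 2
  rw [sumCardAux]
  unfold cA
  refine Finset.card_nbij' (fun r => r.2.1)
    (fun j => ((Function.update y.1 j Sgn.dot, y.2), (j, y.1 j))) ?_ ?_ ?_ ?_
  · intro r hr; obtain ⟨p, j, s⟩ := r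
    simp only [Finset.mem_coe, Finset.mem_filter, Finset.mem_product, Finset.mem_univ, true_and,
      and_true] at hr ⊢
    obtain ⟨hp, ⟨hjd, hs⟩, heq⟩ := hr
    rw [dots, Finset.mem_filter] at hjd
    replace hjd := hjd.2
    have hy1 : y.1 = Function.update p.1 j s := by rw [← heq]
    have hy2 : y.2 = p.2 := by rw [← heq]
    have hsd : s ≠ Sgn.dot := by
      rcases Finset.mem_insert.1 hs with h | h
      · rw [h]; decide
      · rw [Finset.mem_singleton.1 h]; decide
    have hval : y.1 j = s := by rw [hy1, Function.update_self]
    refine ⟨by rw [hval]; exact hsd, ?_⟩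
    have hupd : Function.update y.1 j Sgn.dot = p.1 := by
      rw [hy1, Function.update_idem, ← hjd, Function.update_eq_self]
    rw [hupd, hy2]
    exact (mem_intPairs _ _ _).1 hp
  · intro j hj
    simp only [Finset.mem_coe, Finset.mem_filter, Finset.mem_univ, true_and] at hj
    obtain ⟨hjd, hip⟩ := hj
    simp only [Finset.mem_coe, Finset.mem_filter, Finset.mem_product, Finset.mem_univ, true_and, and_true]
    refine ⟨(mem_intPairs _ _ _).2 hip, ⟨?_, ?_⟩, ?_⟩
    · simp [dots, Function.update_self]
    · rcases h : y.1 j with _ | _ | _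
      · exact absurd h hjd
      · simp
      · simp
    · simp only [Function.update_idem]
      rw [Function.update_eq_self]
  · intro r hr; obtain ⟨p, j, s⟩ := r
    simp only [Finset.mem_coe, Finset.mem_filter, Finset.mem_product, Finset.mem_univ, true_and,
      and_true] at hr
    obtain ⟨hp, ⟨hjd, hs⟩, heq⟩ := hr
    rw [dots, Finset.mem_filter] at hjd
    replace hjd := hjd.2
    have hy1 : y.1 = Function.update p.1 j s := by rw [← heq]
    have hy2 : y.2 = p.2 := by rw [← heq]
    have hval : y.1 j = s := by rw [hy1, Function.update_self]
    have hupd : Function.update y.1 j Sgn.dot = p.1 := by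
      rw [hy1, Function.update_idem, ← hjd, Function.update_eq_self]
    show ((Function.update y.1 j Sgn.dot, y.2), (j, y.1 j)) = (p, (j, s))
    refine Prod.ext ?_ ?_
    · rw [Prod.ext_iff]; exact ⟨hupd, hy2⟩
    · rw [Prod.ext_iff]; exact ⟨rfl, hval⟩
  · intro j hj
    rfl

open Sgn in
lemma sideB (m : ℕ) (α β : Cochain d) (w : Cell d) :
    cup m α (delta β) w
      = ∑ y : Cell d × Cell d, ((cB m w y.1 y.2 : ℕ) : ZMod 2) * (α y.1 * β y.2) := by
  have step1 : cup m α (delta β) w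
      = ∑ p ∈ intPairs m w, ∑ q ∈ dots p.2 ×ˢ ({Sgn.pls, Sgn.mns} : Finset Sgn),
          α p.1 * β (Function.update p.2 q.1 q.2) := by
    unfold cup delta
    refine Finset.sum_congr rfl (fun p _ => ?_)
    rw [Finset.sum_product, Finset.mul_sum]
    refine Finset.sum_congr rfl (fun j _ => ?_)
    rw [Finset.sum_pair (by decide : Sgn.pls ≠ Sgn.mns), mul_add]
  rw [step1]
  refine Eq.trans (countSum2 (intPairs m w)
    (fun p => dots p.2 ×ˢ ({Sgn.pls, Sgn.mns} : Finset Sgn))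
    (fun p q => ((p.1, Function.update p.2 q.1 q.2) : Cell d × Cell d))
    (fun y => α y.1 * β y.2)) ?_
  refine Finset.sum_congr rfl (fun y _ => ?_)
  show (_ : ZMod 2) * _ = _
  congr 2
  rw [sumCardAux]
  unfold cB
  refine Finset.card_nbij' (fun r => r.2.1)
    (fun j => ((y.1, Function.update y.2 j Sgn.dot), (j, y.2 j))) ?_ ?_ ?_ ?_
  · intro r hr; obtain ⟨p, j, s⟩ := r
    simp only [Finset.mem_coe, Finset.mem_filter, Finset.mem_product, Finset.mem_univ, true_and,
      and_true] at hr ⊢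
    obtain ⟨hp, ⟨hjd, hs⟩, heq⟩ := hr
    rw [dots, Finset.mem_filter] at hjd
    replace hjd := hjd.2
    have hy1 : y.1 = p.1 := by rw [← heq]
    have hy2 : y.2 = Function.update p.2 j s := by rw [← heq]
    have hsd : s ≠ Sgn.dot := by
      rcases Finset.mem_insert.1 hs with h | h
      · rw [h]; decide
      · rw [Finset.mem_singleton.1 h]; decide
    have hval : y.2 j = s := by rw [hy2, Function.update_self]
    refine ⟨by rw [hval]; exact hsd, ?_⟩
    have hupd : Function.update y.2 j Sgn.dot = p.2 := by
      rw [hy2, Function.update_idem, ← hjd, Function.update_eq_self]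
    rw [hupd, hy1]
    exact (mem_intPairs _ _ _).1 hp
  · intro j hj
    simp only [Finset.mem_coe, Finset.mem_filter, Finset.mem_univ, true_and] at hj
    obtain ⟨hjd, hip⟩ := hj
    simp only [Finset.mem_coe, Finset.mem_filter, Finset.mem_product, Finset.mem_univ, true_and, and_true]
    refine ⟨(mem_intPairs _ _ _).2 hip, ⟨?_, ?_⟩, ?_⟩
    · simp [dots, Function.update_self]
    · rcases h : y.2 j with _ | _ | _
      · exact absurd h hjd
      · simp
      · simp
    · simp only [Function.update_idem]
      rw [Function.update_eq_self]
  · intro r hr; obtain ⟨p, j, s⟩ := r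
    simp only [Finset.mem_coe, Finset.mem_filter, Finset.mem_product, Finset.mem_univ, true_and,
      and_true] at hr
    obtain ⟨hp, ⟨hjd, hs⟩, heq⟩ := hr
    rw [dots, Finset.mem_filter] at hjd
    replace hjd := hjd.2
    have hy1 : y.1 = p.1 := by rw [← heq]
    have hy2 : y.2 = Function.update p.2 j s := by rw [← heq]
    have hval : y.2 j = s := by rw [hy2, Function.update_self]
    have hupd : Function.update y.2 j Sgn.dot = p.2 := by
      rw [hy2, Function.update_idem, ← hjd, Function.update_eq_self]
    show ((y.1, Function.update y.2 j Sgn.dot), (j, y.2 j)) = (p, (j, s))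
    refine Prod.ext ?_ ?_
    · rw [Prod.ext_iff]; exact ⟨hy1, hupd⟩
    · rw [Prod.ext_iff]; exact ⟨rfl, hval⟩
  · intro j hj
    rfl

lemma side4 (m' : ℕ) (α β : Cochain d) (w : Cell d) :
    cup m' α β w
      = ∑ y : Cell d × Cell d,
          (if IntPair m' w y.1 y.2 then (1 : ZMod 2) else 0) * (α y.1 * β y.2) := by
  unfold cup
  rw [countSum' _ (fun p => p)]
  refine Finset.sum_congr rfl (fun y _ => ?_)
  congr 1
  rw [Finset.filter_eq']
  by_cases h : y ∈ intPairs m' w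
  · rw [if_pos h, if_pos ((mem_intPairs _ _ _).1 h)]; simp
  · rw [if_neg h, if_neg (fun hc => h ((mem_intPairs _ _ _).2 hc))]; simp

lemma side5 (m' : ℕ) (α β : Cochain d) (w : Cell d) :
    cup m' β α w
      = ∑ y : Cell d × Cell d,
          (if IntPair m' w y.2 y.1 then (1 : ZMod 2) else 0) * (α y.1 * β y.2) := by
  unfold cup
  have : ∀ p : Cell d × Cell d, β p.1 * α p.2 = (fun y : Cell d × Cell d => α y.1 * β y.2) (p.2, p.1) := by
    intro p; simp [mul_comm]
  rw [Finset.sum_congr rfl (fun p _ => this p)]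
  refine Eq.trans (countSum' (intPairs m' w) (fun p => ((p.2, p.1) : Cell d × Cell d))
    (fun y => α y.1 * β y.2)) ?_
  refine Finset.sum_congr rfl (fun y _ => ?_)
  show (_ : ZMod 2) * _ = _
  congr 1
  have hfe : (intPairs m' w).filter (fun p => ((p.2, p.1) : Cell d × Cell d) = y)
      = (intPairs m' w).filter (fun p => p = (y.2, y.1)) := by
    refine Finset.filter_congr (fun p _ => ?_)
    constructor
    · intro h; rw [← h]
    · intro h; rw [h]
  rw [hfe, Finset.filter_eq']
  by_cases h : ((y.2, y.1) : Cell d × Cell d) ∈ intPairs m' w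
  · rw [if_pos h, if_pos ((mem_intPairs _ _ _).1 h)]; simp
  · rw [if_neg h, if_neg (fun hc => h ((mem_intPairs _ _ _).2 hc))]; simp

end CupAux
namespace CupAux

lemma mem_bothDot {u v : Cell d} {j : Fin d} :
    j ∈ bothDot u v ↔ u j = Sgn.dot ∧ v j = Sgn.dot := by
  simp [bothDot]

lemma bothDot_comm (u v : Cell d) : bothDot v u = bothDot u v := by
  ext j; simp [mem_bothDot, and_comm]

lemma not_mem_bothDot_left {u v : Cell d} {j : Fin d} (h : u j ≠ Sgn.dot) :
    j ∉ bothDot u v := fun hc => h (mem_bothDot.1 hc).1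

lemma not_mem_bothDot_right {u v : Cell d} {j : Fin d} (h : v j ≠ Sgn.dot) :
    j ∉ bothDot u v := fun hc => h (mem_bothDot.1 hc).2

lemma bothDot_update_left_ne {u v : Cell d} {j : Fin d} (hv : v j ≠ Sgn.dot) :
    bothDot (Function.update u j Sgn.dot) v = bothDot u v := by
  ext i
  by_cases hij : i = j
  · subst hij
    simp [mem_bothDot, hv]
  · simp [mem_bothDot, Function.update_of_ne hij]

lemma bothDot_update_left_dot {u v : Cell d} {j : Fin d} (hv : v j = Sgn.dot) :
    bothDot (Function.update u j Sgn.dot) v = insert j (bothDot u v) := by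
  ext i
  by_cases hij : i = j
  · subst hij
    simp [mem_bothDot, hv]
  · simp [mem_bothDot, Function.update_of_ne hij, hij]

lemma bothDot_update_right_ne {u v : Cell d} {j : Fin d} (hu : u j ≠ Sgn.dot) :
    bothDot u (Function.update v j Sgn.dot) = bothDot u v := by
  ext i
  by_cases hij : i = j
  · subst hij
    simp [mem_bothDot, hu]
  · simp [mem_bothDot, Function.update_of_ne hij]

lemma bothDot_update_right_dot {u v : Cell d} {j : Fin d} (hu : u j = Sgn.dot) :
    bothDot u (Function.update v j Sgn.dot) = insert j (bothDot u v) := by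
  ext i
  by_cases hij : i = j
  · subst hij
    simp [mem_bothDot, hu]
  · simp [mem_bothDot, Function.update_of_ne hij, hij]

lemma pairCond_insert {I : Finset (Fin d)} {j i : Fin d} (hj : j ∉ I) (hij : i ≠ j)
    (a b : Sgn) :
    pairCond (insert j I) i a b ↔
      (if j < i then pairCond I i b a else pairCond I i a b) := by
  unfold pairCond
  by_cases hji : j < i
  · rw [Finset.filter_insert, if_pos hji,
      Finset.card_insert_of_notMem (fun hc => hj (Finset.mem_filter.1 hc).1), if_pos hji]
    by_cases hc : (I.filter (fun x => x < i)).card % 2 = 0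
    · rw [if_pos hc, if_neg (by omega)]
      tauto
    · rw [if_neg hc, if_pos (by omega)]
      tauto
  · rw [Finset.filter_insert, if_neg hji, if_neg hji]

lemma pairCond_or_iff (I : Finset (Fin d)) (i : Fin d) (a b : Sgn) :
    (pairCond I i a b ∨ pairCond I i b a) ↔
      ((a ≠ Sgn.dot ∧ b = Sgn.dot) ∨ (a = Sgn.dot ∧ b ≠ Sgn.dot)) := by
  unfold pairCond
  by_cases hc : (I.filter (fun x => x < i)).card % 2 = 0
  · rw [if_pos hc, if_pos hc]
    cases a <;> cases b <;> simp
  · rw [if_neg hc, if_neg hc]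
    cases a <;> cases b <;> simp

lemma pairCond_not_both (I : Finset (Fin d)) (i : Fin d) (a b : Sgn) :
    ¬(pairCond I i a b ∧ pairCond I i b a) := by
  unfold pairCond
  by_cases hc : (I.filter (fun x => x < i)).card % 2 = 0
  · rw [if_pos hc, if_pos hc]
    cases a <;> cases b <;> simp
  · rw [if_neg hc, if_neg hc]
    cases a <;> cases b <;> simp

lemma even_lemma (E : Finset (Fin d)) (e0 e1 : Fin d → Prop)
    (h : ∀ j ∈ E, ¬(e0 j ∧ e1 j)) :
    ((if ∀ i ∈ E, e0 i then (1 : ZMod 2) else 0) + (if ∀ i ∈ E, e1 i then 1 else 0)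
      + ((E.filter (fun j => (e0 j ∨ e1 j) ∧ (∀ i ∈ E, i < j → e0 i)
          ∧ (∀ i ∈ E, j < i → e1 i))).card : ZMod 2)) = 0 := by
  by_cases hall : ∀ j ∈ E, e0 j ∨ e1 j
  · by_cases hmono : ∀ i ∈ E, ∀ j ∈ E, i < j → e1 i → e1 j
    · set T := E.filter (fun j => (e0 j ∨ e1 j) ∧ (∀ i ∈ E, i < j → e0 i)
          ∧ (∀ i ∈ E, j < i → e1 i)) with hT
      have hTE : ∀ t ∈ T, t ∈ E := fun t ht => (Finset.mem_filter.1 ht).1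
      have hsplit : T.card = (T.filter (fun j => e0 j)).card
          + (T.filter (fun j => e1 j)).card := by
        have hunion : T = (T.filter (fun j => e0 j)) ∪ (T.filter (fun j => e1 j)) := by
          ext t
          simp only [Finset.mem_union, Finset.mem_filter]
          constructor
          · intro ht
            rcases hall t (hTE t ht) with h0 | h1
            · exact Or.inl ⟨ht, h0⟩
            · exact Or.inr ⟨ht, h1⟩
          · rintro (⟨ht, _⟩ | ⟨ht, _⟩) <;> exact ht
        have hdisj : Disjoint (T.filter (fun j => e0 j)) (T.filter (fun j => e1 j)) := by
          rw [Finset.disjoint_left]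
          intro t ht0 ht1
          obtain ⟨htT, h0⟩ := Finset.mem_filter.1 ht0
          obtain ⟨_, h1⟩ := Finset.mem_filter.1 ht1
          exact h t (hTE t htT) ⟨h0, h1⟩
        conv_lhs => rw [hunion]
        exact Finset.card_union_of_disjoint hdisj
      have hT0 : (T.filter (fun j => e0 j)).card = if ∀ i ∈ E, e1 i then 0 else 1 := by
        by_cases hA1 : ∀ i ∈ E, e1 i
        · rw [if_pos hA1, Finset.card_eq_zero, Finset.eq_empty_iff_forall_notMem]
          intro t ht
          obtain ⟨htT, h0⟩ := Finset.mem_filter.1 ht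
          exact h t (hTE t htT) ⟨h0, hA1 t (hTE t htT)⟩
        · rw [if_neg hA1]
          push_neg at hA1
          obtain ⟨j₁, hj₁E, hj₁⟩ := hA1
          have hF : (E.filter (fun i => e0 i)).Nonempty :=
            ⟨j₁, Finset.mem_filter.2 ⟨hj₁E, (hall j₁ hj₁E).resolve_right hj₁⟩⟩
          set js := (E.filter (fun i => e0 i)).max' hF with hjs
          have hjsE : js ∈ E := (Finset.mem_filter.1 ((E.filter (fun i => e0 i)).max'_mem hF)).1
          have hjs0 : e0 js := (Finset.mem_filter.1 ((E.filter (fun i => e0 i)).max'_mem hF)).2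
          have : T.filter (fun j => e0 j) = {js} := by
            ext t
            simp only [Finset.mem_filter, Finset.mem_singleton, hT]
            constructor
            · rintro ⟨⟨htE, _, hpre, hsuf⟩, h0t⟩
              have hle : t ≤ js := Finset.le_max' _ t (Finset.mem_filter.2 ⟨htE, h0t⟩)
              rcases lt_or_eq_of_le hle with hlt | heq
              · exact absurd ⟨hjs0, hsuf js hjsE hlt⟩ (h js hjsE)
              · exact heq
            · rintro rfl
              refine ⟨⟨hjsE, Or.inl hjs0, ?_, ?_⟩, hjs0⟩
              · intro i hiE hilt
                by_contra h0i
                have h1i := (hall i hiE).resolve_left h0i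
                exact h js hjsE ⟨hjs0, hmono i hiE js hjsE hilt h1i⟩
              · intro i hiE hlt
                by_contra h1i
                have h0i := (hall i hiE).resolve_right h1i
                exact absurd (Finset.le_max' _ i (Finset.mem_filter.2 ⟨hiE, h0i⟩))
                  (not_le.2 hlt)
          rw [this, Finset.card_singleton]
      have hT1 : (T.filter (fun j => e1 j)).card = if ∀ i ∈ E, e0 i then 0 else 1 := by
        by_cases hA0 : ∀ i ∈ E, e0 i
        · rw [if_pos hA0, Finset.card_eq_zero, Finset.eq_empty_iff_forall_notMem]
          intro t ht
          obtain ⟨htT, h1⟩ := Finset.mem_filter.1 ht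
          exact h t (hTE t htT) ⟨hA0 t (hTE t htT), h1⟩
        · rw [if_neg hA0]
          push_neg at hA0
          obtain ⟨j₁, hj₁E, hj₁⟩ := hA0
          have hF : (E.filter (fun i => e1 i)).Nonempty :=
            ⟨j₁, Finset.mem_filter.2 ⟨hj₁E, (hall j₁ hj₁E).resolve_left hj₁⟩⟩
          set js := (E.filter (fun i => e1 i)).min' hF with hjs
          have hjsE : js ∈ E := (Finset.mem_filter.1 ((E.filter (fun i => e1 i)).min'_mem hF)).1
          have hjs1 : e1 js := (Finset.mem_filter.1 ((E.filter (fun i => e1 i)).min'_mem hF)).2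
          have : T.filter (fun j => e1 j) = {js} := by
            ext t
            simp only [Finset.mem_filter, Finset.mem_singleton, hT]
            constructor
            · rintro ⟨⟨htE, _, hpre, hsuf⟩, h1t⟩
              have hle : js ≤ t := Finset.min'_le _ t (Finset.mem_filter.2 ⟨htE, h1t⟩)
              rcases lt_or_eq_of_le hle with hlt | heq
              · exact absurd ⟨hpre js hjsE hlt, hjs1⟩ (h js hjsE)
              · exact heq.symm
            · rintro rfl
              refine ⟨⟨hjsE, Or.inr hjs1, ?_, ?_⟩, hjs1⟩
              · intro i hiE hilt
                by_contra h0i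
                have h1i := (hall i hiE).resolve_left h0i
                exact absurd (Finset.min'_le _ i (Finset.mem_filter.2 ⟨hiE, h1i⟩))
                  (not_le.2 hilt)
              · intro i hiE hlt
                by_contra h1i
                have h0i := (hall i hiE).resolve_right h1i
                exact h1i (hmono js hjsE i hiE hlt hjs1)
          rw [this, Finset.card_singleton]
      rw [hsplit, hT0, hT1]
      by_cases hA0 : ∀ i ∈ E, e0 i
      · by_cases hA1 : ∀ i ∈ E, e1 i
        · rw [if_pos hA0, if_pos hA1, if_pos hA1, if_pos hA0]
          decide
        · rw [if_pos hA0, if_neg hA1, if_neg hA1, if_pos hA0]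
          decide
      · by_cases hA1 : ∀ i ∈ E, e1 i
        · rw [if_neg hA0, if_pos hA1, if_pos hA1, if_neg hA0]
          decide
        · rw [if_neg hA0, if_neg hA1, if_neg hA1, if_neg hA0]
          decide
    · push_neg at hmono
      obtain ⟨i, hiE, j, hjE, hij, h1i, hn1j⟩ := hmono
      have hn0i : ¬ e0 i := fun h0 => h i hiE ⟨h0, h1i⟩
      rw [if_neg (fun hc => hn0i (hc i hiE)), if_neg (fun hc => hn1j (hc j hjE))]
      have : E.filter (fun j => (e0 j ∨ e1 j) ∧ (∀ i ∈ E, i < j → e0 i)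
          ∧ (∀ i ∈ E, j < i → e1 i)) = ∅ := by
        rw [Finset.eq_empty_iff_forall_notMem]
        intro t ht
        obtain ⟨htE, _, hpre, hsuf⟩ := Finset.mem_filter.1 ht
        by_cases hit : i < t
        · exact hn0i (hpre i hiE hit)
        · exact hn1j (hsuf j hjE (lt_of_le_of_lt (not_lt.1 hit) hij))
      rw [this]
      simp
  · push_neg at hall
    obtain ⟨j₀, hj₀E, hne⟩ := hall
    rw [if_neg (fun hc => hne.1 (hc j₀ hj₀E)),
      if_neg (fun hc => hne.2 (hc j₀ hj₀E))]
    have : E.filter (fun j => (e0 j ∨ e1 j) ∧ (∀ i ∈ E, i < j → e0 i)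
        ∧ (∀ i ∈ E, j < i → e1 i)) = ∅ := by
      rw [Finset.eq_empty_iff_forall_notMem]
      intro t ht
      obtain ⟨htE, hor, hpre, hsuf⟩ := Finset.mem_filter.1 ht
      rcases lt_trichotomy t j₀ with hlt | rfl | hlt
      · exact hne.2 (hsuf j₀ hj₀E hlt)
      · rcases hor with h0 | h1
        · exact hne.1 h0
        · exact hne.2 h1
      · exact hne.1 (hpre j₀ hj₀E hlt)
    rw [this]
    simp

end CupAux
namespace CupAux

lemma mem_dots {w : Cell d} {j : Fin d} : j ∈ dots w ↔ w j = Sgn.dot := by simp [dots]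

/-- agreement off the dots of `w` -/
def OKp (w u v : Cell d) : Prop := ∀ i, w i ≠ Sgn.dot → u i = w i ∧ v i = w i

/-- the interleaving condition away from `j` -/
def Rp (w u v : Cell d) (j : Fin d) : Prop :=
  ∀ i, w i = Sgn.dot → i ≠ j → i ∉ bothDot u v → pairCond (bothDot u v) i (u i) (v i)

lemma pairCond_iff_even {I : Finset (Fin d)} {i : Fin d}
    (h : (I.filter (fun x => x < i)).card % 2 = 0) (a b : Sgn) :
    pairCond I i a b ↔ ((a = Sgn.pls ∧ b = Sgn.dot) ∨ (a = Sgn.dot ∧ b = Sgn.mns)) := by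
  unfold pairCond; rw [if_pos h]

lemma pairCond_iff_odd {I : Finset (Fin d)} {i : Fin d}
    (h : ¬ (I.filter (fun x => x < i)).card % 2 = 0) (a b : Sgn) :
    pairCond I i a b ↔ ((a = Sgn.mns ∧ b = Sgn.dot) ∨ (a = Sgn.dot ∧ b = Sgn.pls)) := by
  unfold pairCond; rw [if_neg h]

/-- characterization of the `L`-terms when `|K| = m` -/
lemma charL {m : ℕ} {w u v : Cell d} {s : Sgn} (hs : s ≠ Sgn.dot) (j : Fin d)
    (hK : (bothDot u v).card = m) :
    (w j = Sgn.dot ∧ IntPair m (Function.update w j s) u v) ↔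
      (w j = Sgn.dot ∧ OKp w u v ∧ Rp w u v j ∧ u j = s ∧ v j = s) := by
  constructor
  · rintro ⟨hwj, h1, _, h3⟩
    have huv : u j = s ∧ v j = s := by
      have := h1 j (by rw [Function.update_self]; exact hs)
      rwa [Function.update_self] at this
    refine ⟨hwj, ?_, ?_, huv.1, huv.2⟩
    · intro i hwi
      have hij : i ≠ j := fun h => hwi (h ▸ hwj)
      have := h1 i (by rw [Function.update_of_ne hij]; exact hwi)
      rwa [Function.update_of_ne hij] at this
    · intro i hwi hij hiK
      exact h3 i (by rw [Function.update_of_ne hij]; exact hwi) hiK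
  · rintro ⟨hwj, hOK, hR, hu, hv⟩
    refine ⟨hwj, ?_, hK, ?_⟩
    · intro i hi
      by_cases hij : i = j
      · subst hij
        rw [Function.update_self] at hi ⊢
        exact ⟨hu, hv⟩
      · rw [Function.update_of_ne hij] at hi ⊢
        exact hOK i hi
    · intro i hi hiK
      by_cases hij : i = j
      · subst hij
        rw [Function.update_self] at hi
        exact absurd hi hs
      · rw [Function.update_of_ne hij] at hi
        exact hR i hi hij hiK

/-- characterization of the `A`-terms when `|K| = m` -/
lemma charA_m {m : ℕ} {w u v : Cell d} (j : Fin d)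
    (hK : (bothDot u v).card = m) :
    (u j ≠ Sgn.dot ∧ IntPair m w (Function.update u j Sgn.dot) v) ↔
      (w j = Sgn.dot ∧ OKp w u v ∧ Rp w u v j ∧ u j ≠ Sgn.dot ∧ v j ≠ Sgn.dot ∧
        pairCond (bothDot u v) j Sgn.dot (v j)) := by
  constructor
  · rintro ⟨huj, h1, h2, h3⟩
    have hjK : j ∉ bothDot u v := not_mem_bothDot_left huj
    have hvj : v j ≠ Sgn.dot := by
      intro hv
      rw [bothDot_update_left_dot hv, Finset.card_insert_of_notMem hjK, hK] at h2
      omega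
    have hbd : bothDot (Function.update u j Sgn.dot) v = bothDot u v :=
      bothDot_update_left_ne hvj
    have hwj : w j = Sgn.dot := by
      by_contra hwj
      have := (h1 j hwj).1
      rw [Function.update_self] at this
      exact hwj this.symm
    refine ⟨hwj, ?_, ?_, huj, hvj, ?_⟩
    · intro i hwi
      have hij : i ≠ j := fun h => hwi (h ▸ hwj)
      have := h1 i hwi
      rwa [Function.update_of_ne hij] at this
    · intro i hwi hij hiK
      have := h3 i hwi (by rw [hbd]; exact hiK)
      rwa [hbd, Function.update_of_ne hij] at this
    · have := h3 j hwj (by rw [hbd]; exact hjK)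
      rwa [hbd, Function.update_self] at this
  · rintro ⟨hwj, hOK, hR, huj, hvj, hpc⟩
    have hjK : j ∉ bothDot u v := not_mem_bothDot_left huj
    have hbd : bothDot (Function.update u j Sgn.dot) v = bothDot u v :=
      bothDot_update_left_ne hvj
    refine ⟨huj, ?_, by rw [hbd]; exact hK, ?_⟩
    · intro i hwi
      have hij : i ≠ j := fun h => hwi (h ▸ hwj)
      rw [Function.update_of_ne hij]
      exact hOK i hwi
    · intro i hwi hiK
      rw [hbd] at hiK
      by_cases hij : i = j
      · subst hij
        rw [hbd, Function.update_self]
        exact hpc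
      · rw [hbd, Function.update_of_ne hij]
        exact hR i hwi hij hiK

/-- characterization of the `B`-terms when `|K| = m` -/
lemma charB_m {m : ℕ} {w u v : Cell d} (j : Fin d)
    (hK : (bothDot u v).card = m) :
    (v j ≠ Sgn.dot ∧ IntPair m w u (Function.update v j Sgn.dot)) ↔
      (w j = Sgn.dot ∧ OKp w u v ∧ Rp w u v j ∧ u j ≠ Sgn.dot ∧ v j ≠ Sgn.dot ∧
        pairCond (bothDot u v) j (u j) Sgn.dot) := by
  constructor
  · rintro ⟨hvj, h1, h2, h3⟩
    have hjK : j ∉ bothDot u v := not_mem_bothDot_right hvj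
    have huj : u j ≠ Sgn.dot := by
      intro hu
      rw [bothDot_update_right_dot hu, Finset.card_insert_of_notMem hjK, hK] at h2
      omega
    have hbd : bothDot u (Function.update v j Sgn.dot) = bothDot u v :=
      bothDot_update_right_ne huj
    have hwj : w j = Sgn.dot := by
      by_contra hwj
      have := (h1 j hwj).2
      rw [Function.update_self] at this
      exact hwj this.symm
    refine ⟨hwj, ?_, ?_, huj, hvj, ?_⟩
    · intro i hwi
      have hij : i ≠ j := fun h => hwi (h ▸ hwj)
      have := h1 i hwi
      rwa [Function.update_of_ne hij] at this
    · intro i hwi hij hiK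
      have := h3 i hwi (by rw [hbd]; exact hiK)
      rwa [hbd, Function.update_of_ne hij] at this
    · have := h3 j hwj (by rw [hbd]; exact hjK)
      rwa [hbd, Function.update_self] at this
  · rintro ⟨hwj, hOK, hR, huj, hvj, hpc⟩
    have hjK : j ∉ bothDot u v := not_mem_bothDot_right hvj
    have hbd : bothDot u (Function.update v j Sgn.dot) = bothDot u v :=
      bothDot_update_right_ne huj
    refine ⟨hvj, ?_, by rw [hbd]; exact hK, ?_⟩
    · intro i hwi
      have hij : i ≠ j := fun h => hwi (h ▸ hwj)
      rw [Function.update_of_ne hij]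
      exact hOK i hwi
    · intro i hwi hiK
      rw [hbd] at hiK
      by_cases hij : i = j
      · subst hij
        rw [hbd, Function.update_self]
        exact hpc
      · rw [hbd, Function.update_of_ne hij]
        exact hR i hwi hij hiK

end CupAux
namespace CupAux

/-- per-coordinate cancellation when `|bothDot u v| = m` -/
lemma perJ {m : ℕ} {w u v : Cell d} (j : Fin d) (hK : (bothDot u v).card = m) :
    ((if w j = Sgn.dot ∧ IntPair m (Function.update w j Sgn.pls) u v then (1 : ZMod 2) else 0)
      + (if w j = Sgn.dot ∧ IntPair m (Function.update w j Sgn.mns) u v then 1 else 0))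
      + (if u j ≠ Sgn.dot ∧ IntPair m w (Function.update u j Sgn.dot) v then 1 else 0)
      + (if v j ≠ Sgn.dot ∧ IntPair m w u (Function.update v j Sgn.dot) then 1 else 0)
      = 0 := by
  rw [if_congr (charL (by decide) j hK) rfl rfl,
    if_congr (charL (by decide) j hK) rfl rfl,
    if_congr (charA_m j hK) rfl rfl, if_congr (charB_m j hK) rfl rfl]
  by_cases hC : w j = Sgn.dot ∧ OKp w u v ∧ Rp w u v j
  · obtain ⟨hw, hOK, hR⟩ := hC
    have e1 : (w j = Sgn.dot ∧ OKp w u v ∧ Rp w u v j ∧ u j = Sgn.pls ∧ v j = Sgn.pls) ↔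
        (u j = Sgn.pls ∧ v j = Sgn.pls) := ⟨fun h => h.2.2.2, fun h => ⟨hw, hOK, hR, h⟩⟩
    have e2 : (w j = Sgn.dot ∧ OKp w u v ∧ Rp w u v j ∧ u j = Sgn.mns ∧ v j = Sgn.mns) ↔
        (u j = Sgn.mns ∧ v j = Sgn.mns) := ⟨fun h => h.2.2.2, fun h => ⟨hw, hOK, hR, h⟩⟩
    have e3 : (w j = Sgn.dot ∧ OKp w u v ∧ Rp w u v j ∧ u j ≠ Sgn.dot ∧ v j ≠ Sgn.dot ∧
        pairCond (bothDot u v) j Sgn.dot (v j)) ↔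
        (u j ≠ Sgn.dot ∧ v j ≠ Sgn.dot ∧ pairCond (bothDot u v) j Sgn.dot (v j)) := ⟨fun h => h.2.2.2, fun h => ⟨hw, hOK, hR, h⟩⟩
    have e4 : (w j = Sgn.dot ∧ OKp w u v ∧ Rp w u v j ∧ u j ≠ Sgn.dot ∧ v j ≠ Sgn.dot ∧
        pairCond (bothDot u v) j (u j) Sgn.dot) ↔
        (u j ≠ Sgn.dot ∧ v j ≠ Sgn.dot ∧ pairCond (bothDot u v) j (u j) Sgn.dot) := ⟨fun h => h.2.2.2, fun h => ⟨hw, hOK, hR, h⟩⟩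
    rw [if_congr e1 rfl rfl, if_congr e2 rfl rfl, if_congr e3 rfl rfl, if_congr e4 rfl rfl]
    by_cases hpar : ((bothDot u v).filter (fun x => x < j)).card % 2 = 0
    · have p3 : pairCond (bothDot u v) j Sgn.dot (v j) ↔ v j = Sgn.mns := by
        rw [pairCond_iff_even hpar]; simp
      have p4 : pairCond (bothDot u v) j (u j) Sgn.dot ↔ u j = Sgn.pls := by
        rw [pairCond_iff_even hpar]; simp
      rw [if_congr (and_congr_right fun _ => and_congr_right fun _ => p3) rfl rfl,
        if_congr (and_congr_right fun _ => and_congr_right fun _ => p4) rfl rfl]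
      rcases hu : u j <;> rcases hv : v j <;> simp [hu, hv] <;> (try decide)
    · have p3 : pairCond (bothDot u v) j Sgn.dot (v j) ↔ v j = Sgn.pls := by
        rw [pairCond_iff_odd hpar]; simp
      have p4 : pairCond (bothDot u v) j (u j) Sgn.dot ↔ u j = Sgn.mns := by
        rw [pairCond_iff_odd hpar]; simp
      rw [if_congr (and_congr_right fun _ => and_congr_right fun _ => p3) rfl rfl,
        if_congr (and_congr_right fun _ => and_congr_right fun _ => p4) rfl rfl]
      rcases hu : u j <;> rcases hv : v j <;> simp [hu, hv] <;> (try decide)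
  · rw [if_neg (fun h => hC ⟨h.1, h.2.1, h.2.2.1⟩),
      if_neg (fun h => hC ⟨h.1, h.2.1, h.2.2.1⟩),
      if_neg (fun h => hC ⟨h.1, h.2.1, h.2.2.1⟩),
      if_neg (fun h => hC ⟨h.1, h.2.1, h.2.2.1⟩)]
    simp

end CupAux
namespace CupAux

/-- characterization of the `A`-terms when `|K| = m-1` -/
lemma charA_m1 {m : ℕ} {w u v : Cell d} (hK1 : (bothDot u v).card + 1 = m)
    (hOK : OKp w u v) (j : Fin d) :
    (u j ≠ Sgn.dot ∧ IntPair m w (Function.update u j Sgn.dot) v) ↔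
      (w j = Sgn.dot ∧ u j ≠ Sgn.dot ∧ v j = Sgn.dot ∧
        (∀ i ∈ dots w \ bothDot u v, i < j → pairCond (bothDot u v) i (u i) (v i)) ∧
        (∀ i ∈ dots w \ bothDot u v, j < i → pairCond (bothDot u v) i (v i) (u i))) := by
  constructor
  · rintro ⟨huj, h1, h2, h3⟩
    have hjK : j ∉ bothDot u v := not_mem_bothDot_left huj
    have hvj : v j = Sgn.dot := by
      by_contra hv
      rw [bothDot_update_left_ne hv] at h2
      omega
    have hbd : bothDot (Function.update u j Sgn.dot) v = insert j (bothDot u v) :=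
      bothDot_update_left_dot hvj
    have hwj : w j = Sgn.dot := by
      by_contra hwj
      have := (h1 j hwj).1
      rw [Function.update_self] at this
      exact hwj this.symm
    refine ⟨hwj, huj, hvj, ?_, ?_⟩
    · intro i hiE hij
      obtain ⟨hid, hiK⟩ := Finset.mem_sdiff.1 hiE
      have hij' : i ≠ j := ne_of_lt hij
      have hins : i ∉ insert j (bothDot u v) := by
        rw [Finset.mem_insert]; push_neg; exact ⟨hij', hiK⟩
      have := h3 i (mem_dots.1 hid) (by rw [hbd]; exact hins)
      rw [hbd, Function.update_of_ne hij'] at this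
      rwa [pairCond_insert hjK hij', if_neg (not_lt.2 (le_of_lt hij))] at this
    · intro i hiE hij
      obtain ⟨hid, hiK⟩ := Finset.mem_sdiff.1 hiE
      have hij' : i ≠ j := (ne_of_lt hij).symm
      have hins : i ∉ insert j (bothDot u v) := by
        rw [Finset.mem_insert]; push_neg; exact ⟨hij', hiK⟩
      have := h3 i (mem_dots.1 hid) (by rw [hbd]; exact hins)
      rw [hbd, Function.update_of_ne hij'] at this
      rwa [pairCond_insert hjK hij', if_pos hij] at this
  · rintro ⟨hwj, huj, hvj, hpre, hsuf⟩
    have hjK : j ∉ bothDot u v := not_mem_bothDot_left huj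
    have hbd : bothDot (Function.update u j Sgn.dot) v = insert j (bothDot u v) :=
      bothDot_update_left_dot hvj
    refine ⟨huj, ?_, ?_, ?_⟩
    · intro i hwi
      have hij : i ≠ j := fun h => hwi (h ▸ hwj)
      rw [Function.update_of_ne hij]
      exact hOK i hwi
    · rw [hbd, Finset.card_insert_of_notMem hjK]
      omega
    · intro i hwi hins
      rw [hbd] at hins
      rw [hbd]
      rw [Finset.mem_insert] at hins
      push_neg at hins
      obtain ⟨hij, hiK⟩ := hins
      have hiE : i ∈ dots w \ bothDot u v := Finset.mem_sdiff.2 ⟨mem_dots.2 hwi, hiK⟩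
      rw [Function.update_of_ne hij, pairCond_insert hjK hij]
      by_cases hji : j < i
      · rw [if_pos hji]
        exact hsuf i hiE hji
      · rw [if_neg hji]
        exact hpre i hiE (lt_of_le_of_ne (not_lt.1 hji) hij)

/-- characterization of the `B`-terms when `|K| = m-1` -/
lemma charB_m1 {m : ℕ} {w u v : Cell d} (hK1 : (bothDot u v).card + 1 = m)
    (hOK : OKp w u v) (j : Fin d) :
    (v j ≠ Sgn.dot ∧ IntPair m w u (Function.update v j Sgn.dot)) ↔
      (w j = Sgn.dot ∧ u j = Sgn.dot ∧ v j ≠ Sgn.dot ∧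
        (∀ i ∈ dots w \ bothDot u v, i < j → pairCond (bothDot u v) i (u i) (v i)) ∧
        (∀ i ∈ dots w \ bothDot u v, j < i → pairCond (bothDot u v) i (v i) (u i))) := by
  constructor
  · rintro ⟨hvj, h1, h2, h3⟩
    have hjK : j ∉ bothDot u v := not_mem_bothDot_right hvj
    have huj : u j = Sgn.dot := by
      by_contra hu
      rw [bothDot_update_right_ne hu] at h2
      omega
    have hbd : bothDot u (Function.update v j Sgn.dot) = insert j (bothDot u v) :=
      bothDot_update_right_dot huj
    have hwj : w j = Sgn.dot := by
      by_contra hwj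
      have := (h1 j hwj).2
      rw [Function.update_self] at this
      exact hwj this.symm
    refine ⟨hwj, huj, hvj, ?_, ?_⟩
    · intro i hiE hij
      obtain ⟨hid, hiK⟩ := Finset.mem_sdiff.1 hiE
      have hij' : i ≠ j := ne_of_lt hij
      have hins : i ∉ insert j (bothDot u v) := by
        rw [Finset.mem_insert]; push_neg; exact ⟨hij', hiK⟩
      have := h3 i (mem_dots.1 hid) (by rw [hbd]; exact hins)
      rw [hbd, Function.update_of_ne hij'] at this
      rwa [pairCond_insert hjK hij', if_neg (not_lt.2 (le_of_lt hij))] at this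
    · intro i hiE hij
      obtain ⟨hid, hiK⟩ := Finset.mem_sdiff.1 hiE
      have hij' : i ≠ j := (ne_of_lt hij).symm
      have hins : i ∉ insert j (bothDot u v) := by
        rw [Finset.mem_insert]; push_neg; exact ⟨hij', hiK⟩
      have := h3 i (mem_dots.1 hid) (by rw [hbd]; exact hins)
      rw [hbd, Function.update_of_ne hij'] at this
      rwa [pairCond_insert hjK hij', if_pos hij] at this
  · rintro ⟨hwj, huj, hvj, hpre, hsuf⟩
    have hjK : j ∉ bothDot u v := not_mem_bothDot_right hvj
    have hbd : bothDot u (Function.update v j Sgn.dot) = insert j (bothDot u v) :=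
      bothDot_update_right_dot huj
    refine ⟨hvj, ?_, ?_, ?_⟩
    · intro i hwi
      have hij : i ≠ j := fun h => hwi (h ▸ hwj)
      rw [Function.update_of_ne hij]
      exact hOK i hwi
    · rw [hbd, Finset.card_insert_of_notMem hjK]
      omega
    · intro i hwi hins
      rw [hbd] at hins
      rw [hbd]
      rw [Finset.mem_insert] at hins
      push_neg at hins
      obtain ⟨hij, hiK⟩ := hins
      have hiE : i ∈ dots w \ bothDot u v := Finset.mem_sdiff.2 ⟨mem_dots.2 hwi, hiK⟩
      rw [Function.update_of_ne hij, pairCond_insert hjK hij]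
      by_cases hji : j < i
      · rw [if_pos hji]
        exact hsuf i hiE hji
      · rw [if_neg hji]
        exact hpre i hiE (lt_of_le_of_ne (not_lt.1 hji) hij)

end CupAux
namespace CupAux

lemma cast_card_filter (p : Fin d → Prop) [DecidablePred p] :
    (((Finset.univ.filter p).card : ℕ) : ZMod 2) = ∑ j : Fin d, (if p j then (1 : ZMod 2) else 0) := by
  rw [Finset.card_filter]
  push_cast
  refine Finset.sum_congr rfl fun j _ => ?_
  split <;> simp

lemma cL_sum (m : ℕ) (w u v : Cell d) :
    ((cL m w u v : ℕ) : ZMod 2)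
      = ∑ j : Fin d,
          ((if w j = Sgn.dot ∧ IntPair m (Function.update w j Sgn.pls) u v then (1 : ZMod 2) else 0)
            + (if w j = Sgn.dot ∧ IntPair m (Function.update w j Sgn.mns) u v then 1 else 0)) := by
  have h1 : cL m w u v = ∑ j ∈ dots w,
      ((if IntPair m (Function.update w j Sgn.pls) u v then (1 : ℕ) else 0)
        + (if IntPair m (Function.update w j Sgn.mns) u v then 1 else 0)) := by
    unfold cL
    rw [Finset.card_filter, Finset.sum_product]
    refine Finset.sum_congr rfl fun j _ => ?_
    rw [Finset.sum_pair (by decide : Sgn.pls ≠ Sgn.mns)]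
  have h2 : dots w = Finset.univ.filter (fun j => w j = Sgn.dot) := rfl
  rw [h1, h2, Finset.sum_filter]
  push_cast
  refine Finset.sum_congr rfl fun j _ => ?_
  by_cases hw : w j = Sgn.dot <;>
    by_cases hp : IntPair m (Function.update w j Sgn.pls) u v <;>
    by_cases hq : IntPair m (Function.update w j Sgn.mns) u v <;>
    simp [hw, hp, hq]

lemma cA_sum (m : ℕ) (w u v : Cell d) :
    ((cA m w u v : ℕ) : ZMod 2)
      = ∑ j : Fin d,
          (if u j ≠ Sgn.dot ∧ IntPair m w (Function.update u j Sgn.dot) v then (1 : ZMod 2) else 0) :=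
  cast_card_filter _

lemma cB_sum (m : ℕ) (w u v : Cell d) :
    ((cB m w u v : ℕ) : ZMod 2)
      = ∑ j : Fin d,
          (if v j ≠ Sgn.dot ∧ IntPair m w u (Function.update v j Sgn.dot) then (1 : ZMod 2) else 0) :=
  cast_card_filter _

lemma keyCount (m : ℕ) (hm : 1 ≤ m) (w u v : Cell d) :
    ((cL m w u v : ℕ) : ZMod 2)
      = ((cA m w u v : ℕ) : ZMod 2) + ((cB m w u v : ℕ) : ZMod 2)
        + (if IntPair (m - 1) w u v then 1 else 0)
        + (if IntPair (m - 1) w v u then 1 else 0) := by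
  have habc : ∀ a b c e f : ZMod 2, a + b + c + e + f = 0 → a = b + c + e + f := by decide
  apply habc
  by_cases hK : (bothDot u v).card = m
  · -- case |K| = m : the two cup_{m-1} indicators vanish; per-coordinate cancellation
    rw [if_neg (fun h => by have h2 := h.2.1; omega),
      if_neg (fun h => by have h2 := h.2.1; rw [bothDot_comm] at h2; omega),
      add_zero, add_zero, cL_sum, cA_sum, cB_sum,
      ← Finset.sum_add_distrib, ← Finset.sum_add_distrib]
    exact Finset.sum_eq_zero fun j _ => perJ j hK
  · have hcL : cL m w u v = 0 := by
      unfold cL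
      rw [Finset.card_eq_zero, Finset.eq_empty_iff_forall_notMem]
      intro q hq
      rw [Finset.mem_filter] at hq
      exact hK hq.2.2.1
    by_cases hK1 : (bothDot u v).card + 1 = m
    · -- case |K| = m - 1
      by_cases hOK : OKp w u v
      · have iff4 : IntPair (m - 1) w u v
            ↔ ∀ i ∈ dots w \ bothDot u v, pairCond (bothDot u v) i (u i) (v i) := by
          constructor
          · rintro ⟨_, _, h3⟩ i hiE
            obtain ⟨hid, hiK⟩ := Finset.mem_sdiff.1 hiE
            exact h3 i (mem_dots.1 hid) hiK
          · intro h
            exact ⟨hOK, by omega,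
              fun i hwi hiK => h i (Finset.mem_sdiff.2 ⟨mem_dots.2 hwi, hiK⟩)⟩
        have iff5 : IntPair (m - 1) w v u
            ↔ ∀ i ∈ dots w \ bothDot u v, pairCond (bothDot u v) i (v i) (u i) := by
          constructor
          · rintro ⟨_, _, h3⟩ i hiE
            obtain ⟨hid, hiK⟩ := Finset.mem_sdiff.1 hiE
            have hiK' : i ∉ bothDot v u := by rw [bothDot_comm]; exact hiK
            have := h3 i (mem_dots.1 hid) hiK'
            rwa [bothDot_comm] at this
          · intro h
            refine ⟨fun i hi => ⟨(hOK i hi).2, (hOK i hi).1⟩, ?_, ?_⟩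
            · rw [bothDot_comm]; omega
            · intro i hwi hiK
              rw [bothDot_comm] at hiK ⊢
              exact h i (Finset.mem_sdiff.2 ⟨mem_dots.2 hwi, hiK⟩)
        have hA' : Finset.univ.filter (fun j : Fin d =>
              u j ≠ Sgn.dot ∧ IntPair m w (Function.update u j Sgn.dot) v)
            = Finset.univ.filter (fun j : Fin d =>
              w j = Sgn.dot ∧ u j ≠ Sgn.dot ∧ v j = Sgn.dot ∧
              (∀ i ∈ dots w \ bothDot u v, i < j → pairCond (bothDot u v) i (u i) (v i)) ∧
              (∀ i ∈ dots w \ bothDot u v, j < i → pairCond (bothDot u v) i (v i) (u i))) :=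
          Finset.filter_congr (fun j _ => charA_m1 hK1 hOK j)
        have hB' : Finset.univ.filter (fun j : Fin d =>
              v j ≠ Sgn.dot ∧ IntPair m w u (Function.update v j Sgn.dot))
            = Finset.univ.filter (fun j : Fin d =>
              w j = Sgn.dot ∧ u j = Sgn.dot ∧ v j ≠ Sgn.dot ∧
              (∀ i ∈ dots w \ bothDot u v, i < j → pairCond (bothDot u v) i (u i) (v i)) ∧
              (∀ i ∈ dots w \ bothDot u v, j < i → pairCond (bothDot u v) i (v i) (u i))) :=
          Finset.filter_congr (fun j _ => charB_m1 hK1 hOK j)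
        have hAB : cA m w u v + cB m w u v
            = ((dots w \ bothDot u v).filter (fun j =>
                (pairCond (bothDot u v) j (u j) (v j) ∨ pairCond (bothDot u v) j (v j) (u j)) ∧
                (∀ i ∈ dots w \ bothDot u v, i < j → pairCond (bothDot u v) i (u i) (v i)) ∧
                (∀ i ∈ dots w \ bothDot u v, j < i → pairCond (bothDot u v) i (v i) (u i)))).card := by
          unfold cA cB
          rw [hA', hB']
          have hdisj : Disjoint
              (Finset.univ.filter (fun j : Fin d =>
                w j = Sgn.dot ∧ u j ≠ Sgn.dot ∧ v j = Sgn.dot ∧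
                (∀ i ∈ dots w \ bothDot u v, i < j → pairCond (bothDot u v) i (u i) (v i)) ∧
                (∀ i ∈ dots w \ bothDot u v, j < i → pairCond (bothDot u v) i (v i) (u i))))
              (Finset.univ.filter (fun j : Fin d =>
                w j = Sgn.dot ∧ u j = Sgn.dot ∧ v j ≠ Sgn.dot ∧
                (∀ i ∈ dots w \ bothDot u v, i < j → pairCond (bothDot u v) i (u i) (v i)) ∧
                (∀ i ∈ dots w \ bothDot u v, j < i → pairCond (bothDot u v) i (v i) (u i)))) := by
            rw [Finset.disjoint_left]
            intro j hj1 hj2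
            exact (Finset.mem_filter.1 hj1).2.2.1 (Finset.mem_filter.1 hj2).2.2.1
          rw [← Finset.card_union_of_disjoint hdisj, ← Finset.filter_or]
          congr 1
          ext j
          have hor := pairCond_or_iff (bothDot u v) j (u j) (v j)
          simp only [Finset.mem_filter, Finset.mem_univ, true_and, Finset.mem_sdiff,
            mem_dots, mem_bothDot]
          constructor
          · rintro (⟨hw, h1, h2, hp, hs⟩ | ⟨hw, h1, h2, hp, hs⟩)
            · exact ⟨⟨hw, fun hc => h1 hc.1⟩, ⟨hor.2 (Or.inl ⟨h1, h2⟩), hp, hs⟩⟩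
            · exact ⟨⟨hw, fun hc => h2 hc.2⟩, ⟨hor.2 (Or.inr ⟨h1, h2⟩), hp, hs⟩⟩
          · rintro ⟨⟨hw, _⟩, hore, hp, hs⟩
            rcases hor.1 hore with ⟨h1, h2⟩ | ⟨h1, h2⟩
            · exact Or.inl ⟨hw, h1, h2, hp, hs⟩
            · exact Or.inr ⟨hw, h1, h2, hp, hs⟩
        have hev := even_lemma (dots w \ bothDot u v)
          (fun i => pairCond (bothDot u v) i (u i) (v i))
          (fun i => pairCond (bothDot u v) i (v i) (u i))
          (fun j _ => pairCond_not_both _ _ _ _)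
        have hAB' : ((cA m w u v : ℕ) : ZMod 2) + ((cB m w u v : ℕ) : ZMod 2)
            = (((dots w \ bothDot u v).filter (fun j =>
                (pairCond (bothDot u v) j (u j) (v j) ∨ pairCond (bothDot u v) j (v j) (u j)) ∧
                (∀ i ∈ dots w \ bothDot u v, i < j → pairCond (bothDot u v) i (u i) (v i)) ∧
                (∀ i ∈ dots w \ bothDot u v, j < i → pairCond (bothDot u v) i (v i) (u i)))).card
              : ZMod 2) := by
          rw [← Nat.cast_add, hAB]
        rw [hcL, if_congr iff4 rfl rfl, if_congr iff5 rfl rfl]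
        push_cast
        linear_combination hev + hAB'
      · have hcA : cA m w u v = 0 := by
          unfold cA
          rw [Finset.card_eq_zero, Finset.eq_empty_iff_forall_notMem]
          intro j hj
          obtain ⟨_, ⟨h1, _, _⟩⟩ := (Finset.mem_filter.1 hj).2
          apply hOK
          intro i hwi
          have hij : i ≠ j := by
            intro h
            subst h
            have := (h1 i hwi).1
            rw [Function.update_self] at this
            exact hwi this.symm
          have := h1 i hwi
          rwa [Function.update_of_ne hij] at this
        have hcB : cB m w u v = 0 := by
          unfold cB
          rw [Finset.card_eq_zero, Finset.eq_empty_iff_forall_notMem]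
          intro j hj
          obtain ⟨_, ⟨h1, _, _⟩⟩ := (Finset.mem_filter.1 hj).2
          apply hOK
          intro i hwi
          have hij : i ≠ j := by
            intro h
            subst h
            have := (h1 i hwi).2
            rw [Function.update_self] at this
            exact hwi this.symm
          have := h1 i hwi
          rwa [Function.update_of_ne hij] at this
        rw [hcL, hcA, hcB, if_neg (fun h => hOK h.1),
          if_neg (fun h => hOK (fun i hi => ⟨(h.1 i hi).2, (h.1 i hi).1⟩))]
        simp
    · -- case |K| ∉ {m, m-1}: everything vanishes
      have hcA : cA m w u v = 0 := by
        unfold cA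
        rw [Finset.card_eq_zero, Finset.eq_empty_iff_forall_notMem]
        intro j hj
        obtain ⟨huj, ⟨_, h2, _⟩⟩ := (Finset.mem_filter.1 hj).2
        by_cases hv : v j = Sgn.dot
        · rw [bothDot_update_left_dot hv,
            Finset.card_insert_of_notMem (not_mem_bothDot_left huj)] at h2
          exact hK1 h2
        · rw [bothDot_update_left_ne hv] at h2
          exact hK h2
      have hcB : cB m w u v = 0 := by
        unfold cB
        rw [Finset.card_eq_zero, Finset.eq_empty_iff_forall_notMem]
        intro j hj
        obtain ⟨hvj, ⟨_, h2, _⟩⟩ := (Finset.mem_filter.1 hj).2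
        by_cases hu : u j = Sgn.dot
        · rw [bothDot_update_right_dot hu,
            Finset.card_insert_of_notMem (not_mem_bothDot_right hvj)] at h2
          exact hK1 h2
        · rw [bothDot_update_right_ne hu] at h2
          exact hK h2
      rw [hcL, hcA, hcB, if_neg (fun h => by have h2 := h.2.1; omega),
        if_neg (fun h => by have h2 := h.2.1; rw [bothDot_comm] at h2; omega)]
      simp

end CupAux
/-- For `d ≥ 1`, `1 ≤ m ≤ d`, and `ℤ₂`-cochains `α`, `β` on the
`d`-dimensional hypercube,
`δ(α ∪_m β) = (δα) ∪_m β + α ∪_m (δβ) + α ∪_{m−1} β + β ∪_{m−1} α`,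
as an equality of `ℤ₂`-cochains. -/
theorem cup_higher_leibniz (d m : ℕ) (hd : 1 ≤ d) (hm : 1 ≤ m) (hmd : m ≤ d)
    (α β : Cochain d) :
    delta (cup m α β) =
      cup m (delta α) β + cup m α (delta β) + cup (m - 1) α β + cup (m - 1) β α := by
  funext w
  simp only [Pi.add_apply]
  rw [CupAux.sideL m α β w, CupAux.sideA m α β w, CupAux.sideB m α β w,
    CupAux.side4 (m - 1) α β w, CupAux.side5 (m - 1) α β w,
    ← Finset.sum_add_distrib, ← Finset.sum_add_distrib, ← Finset.sum_add_distrib]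
  refine Finset.sum_congr rfl fun y _ => ?_
  rw [← add_mul, ← add_mul, ← add_mul]
  congr 1
  exact CupAux.keyCount m hm w y.1 y.2
end

section
/- Let d ≥ 2, let 1 ≤ i, j ≤ d, let p₁, p₂ ∈ {0,1}, and write ε₁ = (−1)^{p₁}, ε₂ = (−1)^{p₂} (identifying +1 with + and −1 with −). Let î_{ε₁} and ĵ_{ε₂} be the (d−1)-cells of the d-dimensional hypercube whose i-th (respectively j-th) entry is ε₁ (respectively ε₂) with all other entries •. If i ≠ j, then (𝟙_{î_{ε₁}} ∪_{d−2} 𝟙_{ĵ_{ε₂}} + 𝟙_{ĵ_{ε₂}} ∪_{d−2} 𝟙_{î_{ε₁}})(•,…,•) = 1 in ℤ₂ if and only if i + j + p₁ + p₂ is even; if i = j, the left-hand side equals 0. -/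
/-- The `(d−1)`-cell `î_s` whose `i`-th entry is `s` and whose other entries are all `•`. -/
def hatCell {d : ℕ} (i : Fin d) (s : Sgn) : Cell d := fun j => if j = i then s else Sgn.dot

/-- `ε(t)`: the sign `+` if `t` is even and `−` if `t` is odd. -/
def eps (t : ℕ) : Sgn := if t % 2 = 0 then Sgn.pls else Sgn.mns

/-- `α` is a `p`-cochain: it vanishes on all cells that are not `p`-cells. -/
def IsCochainOfDeg {d : ℕ} (p : ℕ) (α : Cochain d) : Prop :=
  ∀ w : Cell d, (dots w).card ≠ p → α w = 0

/-- The indicator cochain of a cell: value `1` on that cell and `0` elsewhere. -/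
def indicator {d : ℕ} (c : Cell d) : Cochain d := fun w => if w = c then 1 else 0
open Classical in
lemma cup_indicator {d : ℕ} (m : ℕ) (w c₁ c₂ : Cell d) :
    cup m (indicator c₁) (indicator c₂) w =
      if IntPair m w c₁ c₂ then 1 else 0 := by
  classical
  have h : ∀ p : Cell d × Cell d,
      indicator c₁ p.1 * indicator c₂ p.2 = if p = (c₁, c₂) then 1 else 0 := by
    rintro ⟨a, b⟩
    simp only [indicator, Prod.mk.injEq, Prod.ext_iff]
    by_cases h1 : a = c₁ <;> by_cases h2 : b = c₂ <;> simp [h1, h2]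
  unfold cup
  rw [Finset.sum_congr rfl (fun p _ => h p), Finset.sum_ite_eq' (intPairs m w) (c₁, c₂) (fun _ => (1 : ZMod 2))]
  unfold intPairs
  simp [Finset.mem_filter]
lemma bothDot_hat {d : ℕ} (i j : Fin d) (s₁ s₂ : Sgn) (h₁ : s₁ ≠ Sgn.dot)
    (h₂ : s₂ ≠ Sgn.dot) :
    bothDot (hatCell i s₁) (hatCell j s₂) = ({i, j} : Finset (Fin d))ᶜ := by
  ext k
  simp only [bothDot, Finset.mem_filter, Finset.mem_univ, true_and]
  simp only [bothDot, hatCell, Finset.mem_filter, Finset.mem_univ, true_and,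
    Finset.mem_compl, Finset.mem_insert, Finset.mem_singleton]
  constructor
  · rintro ⟨ha, hb⟩ (rfl | rfl)
    · simp at ha; exact h₁ ha
    · simp at hb; exact h₂ hb
  · intro h
    push_neg at h
    simp [h.1, h.2]

lemma card_compl_pair {d : ℕ} (i j : Fin d) (hij : i ≠ j) :
    (({i, j} : Finset (Fin d))ᶜ).card = d - 2 := by
  rw [Finset.card_compl, Finset.card_insert_of_notMem (by simp [hij]),
    Finset.card_singleton]
  simp

lemma filter_lt_compl_pair {d : ℕ} (i j k : Fin d) (hij : i ≠ j) :
    ((({i, j} : Finset (Fin d))ᶜ).filter (fun x => x < k)).card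
      = k.val - ((if i < k then 1 else 0) + (if j < k then 1 else 0)) := by
  classical
  have h1 : (({i, j} : Finset (Fin d))ᶜ).filter (fun x => x < k)
      = (Finset.Iio k) \ (({i, j} : Finset (Fin d)) ∩ Finset.Iio k) := by
    ext x
    simp only [Finset.mem_filter, Finset.mem_compl, Finset.mem_sdiff, Finset.mem_Iio,
      Finset.mem_inter]
    tauto
  have h2 : (({i, j} : Finset (Fin d)) ∩ Finset.Iio k).card
      = (if i < k then 1 else 0) + (if j < k then 1 else 0) := by
    have h3 : ({i, j} : Finset (Fin d)) ∩ Finset.Iio k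
        = ({i, j} : Finset (Fin d)).filter (fun x => x < k) := by
      ext x; simp [Finset.mem_Iio, and_comm]
    rw [h3, Finset.filter_insert, Finset.filter_singleton]
    by_cases hik : i < k <;> by_cases hjk : j < k <;>
      simp [hik, hjk, Finset.card_insert_of_notMem, hij]
  rw [h1, Finset.card_sdiff_of_subset Finset.inter_subset_right, h2, Fin.card_Iio]
lemma eps_ne_dot (t : ℕ) : eps t ≠ Sgn.dot := by
  unfold eps; split <;> simp

lemma pairCond_left {d : ℕ} (I : Finset (Fin d)) (k : Fin d) (s : Sgn)
    (hs : s ≠ Sgn.dot) :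
    pairCond I k s Sgn.dot ↔ s = eps ((I.filter (fun x => x < k)).card) := by
  unfold pairCond eps
  split <;> rename_i h <;> simp [h] <;> tauto

lemma pairCond_right {d : ℕ} (I : Finset (Fin d)) (k : Fin d) (s : Sgn)
    (hs : s ≠ Sgn.dot) :
    pairCond I k Sgn.dot s ↔ s = eps ((I.filter (fun x => x < k)).card + 1) := by
  unfold pairCond eps
  rcases Nat.mod_two_eq_zero_or_one ((I.filter (fun x => x < k)).card) with h | h <;>
    simp [h, Nat.add_mod, hs] <;> tauto

lemma eps_eq_eps_iff (a b : ℕ) : eps a = eps b ↔ a % 2 = b % 2 := by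
  unfold eps
  rcases Nat.mod_two_eq_zero_or_one a with h | h <;>
    rcases Nat.mod_two_eq_zero_or_one b with h' | h' <;> simp [h, h']

lemma intPair_hat_iff {d : ℕ} (hd : 2 ≤ d) {i j : Fin d} (hij : i ≠ j)
    (s₁ s₂ : Sgn) (h₁ : s₁ ≠ Sgn.dot) (h₂ : s₂ ≠ Sgn.dot) :
    IntPair (d - 2) (topCell d) (hatCell i s₁) (hatCell j s₂) ↔
      (s₁ = eps (i.val - (if j < i then 1 else 0)) ∧
       s₂ = eps ((j.val - (if i < j then 1 else 0)) + 1)) := by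
  unfold IntPair
  rw [bothDot_hat i j s₁ s₂ h₁ h₂]
  have hfi := filter_lt_compl_pair i j i hij
  have hfj := filter_lt_compl_pair i j j hij
  simp only [lt_irrefl, if_false] at hfi hfj
  rw [Nat.zero_add] at hfi
  rw [Nat.add_zero] at hfj
  constructor
  · rintro ⟨-, -, h3⟩
    have hi := h3 i rfl (by simp)
    have hj := h3 j rfl (by simp)
    simp only [hatCell, if_pos rfl, if_neg hij, if_neg (Ne.symm hij), ite_true] at hi hj
    rw [pairCond_left _ _ _ h₁, hfi] at hi
    rw [pairCond_right _ _ _ h₂, hfj] at hj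
    exact ⟨hi, hj⟩
  · rintro ⟨ha, hb⟩
    refine ⟨fun k hk => absurd rfl hk, card_compl_pair i j hij, fun k _ hk => ?_⟩
    simp only [Finset.mem_compl, not_not, Finset.mem_insert, Finset.mem_singleton] at hk
    rcases hk with rfl | rfl
    · simp only [hatCell, if_pos rfl, if_neg hij, ite_true]
      rw [pairCond_left _ _ _ h₁, hfi]
      exact ha
    · simp only [hatCell, if_pos rfl, if_neg (Ne.symm hij), ite_true]
      rw [pairCond_right _ _ _ h₂, hfj]
      exact hb
lemma zmod_ite_add (A B : Prop) [Decidable A] [Decidable B] (hAB : ¬(A ∧ B)) :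
    ((if A then (1 : ZMod 2) else 0) + (if B then 1 else 0) = 1) ↔ (A ∨ B) := by
  by_cases hA : A <;> by_cases hB : B <;> simp [hA, hB] <;> tauto


/-- For `d ≥ 2`, `1 ≤ i, j ≤ d` (written `1`-based as `i.val + 1`,
`j.val + 1` for `i j : Fin d`), `p₁ p₂ ∈ {0,1}` and `ε₁ = (−1)^{p₁}`, `ε₂ = (−1)^{p₂}`
(so `εᵣ = eps pᵣ`): if `i ≠ j` then
`(𝟙_{î_{ε₁}} ∪_{d−2} 𝟙_{ĵ_{ε₂}} + 𝟙_{ĵ_{ε₂}} ∪_{d−2} 𝟙_{î_{ε₁}})(•,…,•) = 1` in `ℤ₂`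
iff `i + j + p₁ + p₂` is even; and if `i = j` the left-hand side equals `0`. -/
theorem cup_d_sub_two_indicators (d : ℕ) (hd : 2 ≤ d) (i j : Fin d) (p₁ p₂ : ℕ)
    (hp₁ : p₁ ≤ 1) (hp₂ : p₂ ≤ 1) :
    (i ≠ j →
      ((cup (d - 2) (indicator (hatCell i (eps p₁))) (indicator (hatCell j (eps p₂)))
          + cup (d - 2) (indicator (hatCell j (eps p₂))) (indicator (hatCell i (eps p₁))))
          (topCell d) = 1
        ↔ Even ((i.val + 1) + (j.val + 1) + p₁ + p₂))) ∧
    (i = j →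
      (cup (d - 2) (indicator (hatCell i (eps p₁))) (indicator (hatCell j (eps p₂)))
          + cup (d - 2) (indicator (hatCell j (eps p₂))) (indicator (hatCell i (eps p₁))))
          (topCell d) = 0) := by
  have e1 := eps_ne_dot p₁
  have e2 := eps_ne_dot p₂
  constructor
  · intro hij
    rw [Pi.add_apply, cup_indicator, cup_indicator]
    simp only [intPair_hat_iff hd hij _ _ e1 e2,
      intPair_hat_iff hd (Ne.symm hij) _ _ e2 e1, eps_eq_eps_iff]
    rw [Nat.even_iff]
    rcases lt_or_gt_of_ne hij with hlt | hlt
    · have h1 : i.val < j.val := hlt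
      have h2 : ¬ j < i := not_lt.mpr hlt.le
      simp only [if_pos hlt, if_neg h2, if_neg (lt_irrefl _)]
      rw [zmod_ite_add _ _ (by omega)]
      omega
    · have h1 : j.val < i.val := hlt
      have h2 : ¬ i < j := not_lt.mpr hlt.le
      simp only [if_pos hlt, if_neg h2, if_neg (lt_irrefl _)]
      rw [zmod_ite_add _ _ (by omega)]
      omega
  · rintro rfl
    have hnot : ∀ s₁ s₂ : Sgn, s₁ ≠ Sgn.dot → s₂ ≠ Sgn.dot →
        ¬ IntPair (d - 2) (topCell d) (hatCell i s₁) (hatCell i s₂) := by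
      rintro s₁ s₂ h₁ h₂ ⟨-, hcard, -⟩
      rw [bothDot_hat i i s₁ s₂ h₁ h₂] at hcard
      rw [Finset.card_compl] at hcard
      simp only [Finset.insert_eq_self.mpr (Finset.mem_singleton_self i),
        Finset.card_singleton, Fintype.card_fin] at hcard
      omega
    rw [Pi.add_apply, cup_indicator, cup_indicator, if_neg (hnot _ _ e1 e2),
      if_neg (hnot _ _ e2 e1)]
    simp
end
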